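/- For a sequence α ∈ {0,1}^∞, let λ_m be the proportion of zeros among α_1,...,α_m, and let λ̄ = limsup λ_m, λ̲ = liminf λ_m. Then the lower box dimension of K_α equals λ̄·log_5(13) + (1−λ̄)·log_5(44) and the upper box dimension of K_α equals λ̲·log_5(13) + (1−λ̲)·log_5(44). -/

import Mathlib

open Pointwise

noncomputable section

/-- `ℝ^k` with the Euclidean metric. -/
abbrev E (k : ℕ) := EuclideanSpace ℝ (Fin k)

/-- Points of `ℝ^k` all of whose coordinates are integers in `{0, …, n-1}`. -/
def digits (n k : ℕ) : Set (E k) := {x | ∀ i, ∃ m : ℕ, m < n ∧ x i = m}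

/-- The unit cube `[0,1]^k`. -/
def unitCube (k : ℕ) : Set (E k) := {x | ∀ i, x i ∈ Set.Icc (0:ℝ) 1}

/-- The Hutchinson operator `A ↦ (A + D b)/5` on subsets of `ℝ³`,
for a pair of digit sets `D false = D₀`, `D true = D₁`. -/
def Ttil (D : Bool → Set (E 3)) (b : Bool) (A : Set (E 3)) : Set (E 3) :=
  (5:ℝ)⁻¹ • (A + D b)

/-- `F_w = T_{w₁} ∘ … ∘ T_{w_k} ([0,1]³)` for a finite binary word `w`. -/
def Fword (D : Bool → Set (E 3)) (w : List Bool) : Set (E 3) :=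
  w.foldr (fun b A => Ttil D b A) (unitCube 3)

/-- Length of the longest common prefix of two words. -/
def lcp : List Bool → List Bool → ℕ
  | a :: as, b :: bs => if a = b then lcp as bs + 1 else 0
  | _, _ => 0

/-- The length-`k` initial segment of an infinite binary sequence. -/
def prefixList (α : ℕ → Bool) (k : ℕ) : List Bool := List.ofFn (fun i : Fin k => α i)

/-- `K_α = ⋂_{k≥1} T_{α₁} ∘ … ∘ T_{α_k}([0,1]³)`. -/
def Kset (D : Bool → Set (E 3)) (α : ℕ → Bool) : Set (E 3) :=
  ⋂ k : ℕ, Fword D (prefixList α (k + 1))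

/-- The "cross" digit set `D₀`: the 13 points `(2,2,j), (2,j,2), (j,2,2)`, `j ∈ {0,…,4}`. -/
def crossD : Set (E 3) :=
  {x | ∃ j : ℕ, j ≤ 4 ∧ (x = ![2, 2, (j:ℝ)] ∨ x = ![2, (j:ℝ), 2] ∨ x = ![(j:ℝ), 2, 2])}

/-- The "frame" digit set `D₁`: the 44 points of `{0,…,4}³` having at least two
coordinates in `{0,4}`. -/
def frameD : Set (E 3) :=
  {x | ∃ a b c : ℕ, a ≤ 4 ∧ b ≤ 4 ∧ c ≤ 4 ∧ x = ![(a:ℝ), (b:ℝ), (c:ℝ)] ∧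
    ((a ∈ ({0,4} : Set ℕ) ∧ b ∈ ({0,4} : Set ℕ)) ∨
     (a ∈ ({0,4} : Set ℕ) ∧ c ∈ ({0,4} : Set ℕ)) ∨
     (b ∈ ({0,4} : Set ℕ) ∧ c ∈ ({0,4} : Set ℕ)))}

/-- The pair of digit sets of the paper: `D false = D₀` (cross), `D true = D₁` (frame). -/
def paperD : Bool → Set (E 3) := fun b => if b then frameD else crossD

/-- The least number of balls of radius `δ` needed to cover `s`. -/
def coverNumber (s : Set (E 3)) (δ : ℝ) : ℕ :=
  sInf {m | ∃ t : Finset (E 3), t.card = m ∧ s ⊆ ⋃ x ∈ t, Metric.ball x δ}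

/-- Lower box dimension, computed via covering numbers at the scales `δ = 5^{-k}`. -/
def lowerBoxDim (s : Set (E 3)) : ℝ :=
  Filter.liminf (fun k : ℕ => Real.log (coverNumber s (1 / 5 ^ k)) / ((k : ℝ) * Real.log 5))
    Filter.atTop

/-- Upper box dimension, computed via covering numbers at the scales `δ = 5^{-k}`. -/
def upperBoxDim (s : Set (E 3)) : ℝ :=
  Filter.limsup (fun k : ℕ => Real.log (coverNumber s (1 / 5 ^ k)) / ((k : ℝ) * Real.log 5))
    Filter.atTop

/-- `λ_m`: the proportion of zeros among `α₁, …, α_m`. -/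
def zeroDensity (α : ℕ → Bool) (m : ℕ) : ℝ :=
  ((Finset.range m).filter fun i => α i = false).card / m

def fin3ToE (t : Fin 5 × Fin 5 × Fin 5) : E 3 := WithLp.toLp 2 ![(t.1 : ℝ), (t.2.1 : ℝ), (t.2.2 : ℝ)]

lemma fin3ToE_injective : Function.Injective fin3ToE := by
  rintro ⟨a, b, c⟩ ⟨a', b', c'⟩ h
  have h0 := congrFun (congrArg WithLp.ofLp h) 0
  have h1 := congrFun (congrArg WithLp.ofLp h) 1
  have h2 := congrFun (congrArg WithLp.ofLp h) 2
  simp only [fin3ToE, PiLp.toLp_apply, Matrix.cons_val_zero, Matrix.cons_val_one, Matrix.head_cons,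
    Matrix.cons_val_two, Matrix.tail_cons, Nat.cast_inj] at h0 h1 h2
  exact Prod.ext (Fin.val_injective h0) (Prod.ext (Fin.val_injective h1) (Fin.val_injective h2))

def crossP (t : Fin 5 × Fin 5 × Fin 5) : Prop :=
  (t.1 = 2 ∧ t.2.1 = 2) ∨ (t.1 = 2 ∧ t.2.2 = 2) ∨ (t.2.1 = 2 ∧ t.2.2 = 2)

def frameP (t : Fin 5 × Fin 5 × Fin 5) : Prop :=
  ((t.1 = 0 ∨ t.1 = 4) ∧ (t.2.1 = 0 ∨ t.2.1 = 4)) ∨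
  ((t.1 = 0 ∨ t.1 = 4) ∧ (t.2.2 = 0 ∨ t.2.2 = 4)) ∨
  ((t.2.1 = 0 ∨ t.2.1 = 4) ∧ (t.2.2 = 0 ∨ t.2.2 = 4))

instance : DecidablePred crossP := fun t => by unfold crossP; infer_instance
instance : DecidablePred frameP := fun t => by unfold frameP; infer_instance

local instance : DecidableEq (E 3) := Classical.decEq _

def Dfin (b : Bool) : Finset (E 3) :=
  if b then (Finset.univ.filter frameP).image fin3ToE
  else (Finset.univ.filter crossP).image fin3ToE

lemma Dfin_card (b : Bool) : (Dfin b).card = if b then 44 else 13 := by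
  cases b <;>
    simp only [Dfin, if_true, if_false, Bool.false_eq_true] <;>
    rw [Finset.card_image_of_injective _ fin3ToE_injective] <;> decide

lemma natCast_fin_cast (m : ℕ) (h : m ≤ 4) : ((⟨m, by omega⟩ : Fin 5) : ℝ) = (m : ℝ) := rfl

lemma Dfin_coe (b : Bool) : (Dfin b : Set (E 3)) = paperD b := by
  cases b
  · ext x
    simp only [Dfin, if_false, Bool.false_eq_true, Finset.coe_image, Finset.coe_filter,
      Finset.mem_univ, true_and, Set.mem_image, Set.mem_setOf_eq, paperD, crossD]
    constructor
    · rintro ⟨⟨a, b, c⟩, hP, rfl⟩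
      rcases hP with ⟨ha, hb⟩ | ⟨ha, hc⟩ | ⟨hb, hc⟩
      · exact ⟨c.val, by omega, Or.inl (by subst ha; subst hb; rfl)⟩
      · exact ⟨b.val, by omega, Or.inr (Or.inl (by subst ha; subst hc; rfl))⟩
      · exact ⟨a.val, by omega, Or.inr (Or.inr (by subst hb; subst hc; rfl))⟩
    · rintro ⟨j, hj, h | h | h⟩
      · exact ⟨(2, 2, ⟨j, by omega⟩), Or.inl ⟨rfl, rfl⟩, (by ext i; rw [h]; rfl)⟩
      · exact ⟨(2, ⟨j, by omega⟩, 2), Or.inr (Or.inl ⟨rfl, rfl⟩), (by ext i; rw [h]; rfl)⟩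
      · exact ⟨(⟨j, by omega⟩, 2, 2), Or.inr (Or.inr ⟨rfl, rfl⟩), (by ext i; rw [h]; rfl)⟩
  · ext x
    simp only [Dfin, if_true, Finset.coe_image, Finset.coe_filter,
      Finset.mem_univ, true_and, Set.mem_image, Set.mem_setOf_eq, paperD, frameD]
    constructor
    · rintro ⟨⟨a, b, c⟩, hP, rfl⟩
      refine ⟨a.val, b.val, c.val, by omega, by omega, by omega, rfl, ?_⟩
      simp only [Set.mem_insert_iff, Set.mem_singleton_iff]
      rcases hP with ⟨ha, hb⟩ | ⟨ha, hc⟩ | ⟨hb, hc⟩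
      · exact Or.inl ⟨by rcases ha with h|h <;> subst h <;> decide,
          by rcases hb with h|h <;> subst h <;> decide⟩
      · exact Or.inr (Or.inl ⟨by rcases ha with h|h <;> subst h <;> decide,
          by rcases hc with h|h <;> subst h <;> decide⟩)
      · exact Or.inr (Or.inr ⟨by rcases hb with h|h <;> subst h <;> decide,
          by rcases hc with h|h <;> subst h <;> decide⟩)
    · rintro ⟨a, b, c, ha, hb, hc, hx, hP⟩
      refine ⟨(⟨a, by omega⟩, ⟨b, by omega⟩, ⟨c, by omega⟩), ?_, (by ext i; rw [hx]; rfl)⟩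
      simp only [Set.mem_insert_iff, Set.mem_singleton_iff] at hP
      unfold frameP
      rcases hP with ⟨h1, h2⟩ | ⟨h1, h2⟩ | ⟨h1, h2⟩
      · exact Or.inl ⟨by rcases h1 with h|h <;> subst h <;> simp [Fin.ext_iff],
          by rcases h2 with h|h <;> subst h <;> simp [Fin.ext_iff]⟩
      · exact Or.inr (Or.inl ⟨by rcases h1 with h|h <;> subst h <;> simp [Fin.ext_iff],
          by rcases h2 with h|h <;> subst h <;> simp [Fin.ext_iff]⟩)
      · exact Or.inr (Or.inr ⟨by rcases h1 with h|h <;> subst h <;> simp [Fin.ext_iff],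
          by rcases h2 with h|h <;> subst h <;> simp [Fin.ext_iff]⟩)

lemma fin3ToE_digit (t : Fin 5 × Fin 5 × Fin 5) (i : Fin 3) :
    ∃ m : ℕ, m ≤ 4 ∧ fin3ToE t i = m := by
  fin_cases i
  · exact ⟨t.1.val, Nat.lt_succ_iff.mp t.1.isLt, rfl⟩
  · exact ⟨t.2.1.val, Nat.lt_succ_iff.mp t.2.1.isLt, rfl⟩
  · exact ⟨t.2.2.val, Nat.lt_succ_iff.mp t.2.2.isLt, rfl⟩

lemma Dfin_digit {b : Bool} {x : E 3} (hx : x ∈ Dfin b) (i : Fin 3) :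
    ∃ m : ℕ, m ≤ 4 ∧ x i = m := by
  cases b <;>
    simp only [Dfin, if_true, if_false, Bool.false_eq_true, Finset.mem_image] at hx <;>
    obtain ⟨t, _, rfl⟩ := hx <;>
    exact fin3ToE_digit t i

/-- Admissible digit strings for the word `w`. -/
def wordFin : List Bool → Finset (List (E 3))
  | [] => {[]}
  | b :: w => ((Dfin b) ×ˢ (wordFin w)).image fun p => p.1 :: p.2

def pos : List (E 3) → E 3
  | [] => 0
  | d :: ds => (5:ℝ)⁻¹ • (d + pos ds)

lemma mem_wordFin_cons {b : Bool} {w : List Bool} {l : List (E 3)} :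
    l ∈ wordFin (b :: w) ↔ ∃ d ∈ Dfin b, ∃ ds ∈ wordFin w, l = d :: ds := by
  simp only [wordFin, Finset.mem_image, Finset.mem_product, Prod.exists]
  constructor
  · rintro ⟨d, ds, ⟨h1, h2⟩, rfl⟩; exact ⟨d, h1, ds, h2, rfl⟩
  · rintro ⟨d, h1, ds, h2, rfl⟩; exact ⟨d, ds, ⟨h1, h2⟩, rfl⟩

lemma wordFin_length {w : List Bool} {ds : List (E 3)} (h : ds ∈ wordFin w) :
    ds.length = w.length := by
  induction w generalizing ds with
  | nil => simp only [wordFin, Finset.mem_singleton] at h; simp [h]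
  | cons b w ih =>
    rw [mem_wordFin_cons] at h
    obtain ⟨d, _, ds', h2, rfl⟩ := h
    simp [ih h2]

lemma wordFin_digit {w : List Bool} {ds : List (E 3)} (h : ds ∈ wordFin w)
    {d : E 3} (hd : d ∈ ds) (i : Fin 3) : ∃ m : ℕ, m ≤ 4 ∧ d i = m := by
  induction w generalizing ds with
  | nil => simp only [wordFin, Finset.mem_singleton] at h; subst h; simp at hd
  | cons b w ih =>
    rw [mem_wordFin_cons] at h
    obtain ⟨e, he, ds', h2, rfl⟩ := h
    rcases List.mem_cons.1 hd with rfl | hd'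
    · exact Dfin_digit he i
    · exact ih h2 hd'

lemma wordFin_nonempty (w : List Bool) (hD : ∀ b, (Dfin b).Nonempty) :
    (wordFin w).Nonempty := by
  induction w with
  | nil => exact ⟨[], by simp [wordFin]⟩
  | cons b w ih =>
    obtain ⟨d, hd⟩ := hD b
    obtain ⟨ds, hds⟩ := ih
    exact ⟨d :: ds, mem_wordFin_cons.2 ⟨d, hd, ds, hds, rfl⟩⟩

/-- Position spec : coordinates are nonneg integer multiples of `5⁻¹^len`, bounded by
`1 - 5⁻¹^len`. -/
lemma pos_spec {w : List Bool} {ds : List (E 3)} (h : ds ∈ wordFin w) (i : Fin 3) :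
    ∃ m : ℕ, pos ds i = m * ((5:ℝ)⁻¹) ^ ds.length ∧
      0 ≤ pos ds i ∧ pos ds i ≤ 1 - ((5:ℝ)⁻¹) ^ ds.length := by
  induction w generalizing ds with
  | nil =>
    simp only [wordFin, Finset.mem_singleton] at h; subst h
    exact ⟨0, by norm_num [pos], by norm_num [pos], by norm_num [pos]⟩
  | cons b w ih =>
    rw [mem_wordFin_cons] at h
    obtain ⟨d, hd, ds', h2, rfl⟩ := h
    obtain ⟨m, hm, hm0, hm1⟩ := ih h2
    obtain ⟨md, hmd4, hmd⟩ := Dfin_digit hd i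
    have hp : pos (d :: ds') i = (5:ℝ)⁻¹ * (d i + pos ds' i) := by
      simp [pos, PiLp.smul_apply, PiLp.add_apply, smul_eq_mul, mul_add]
    refine ⟨md * 5 ^ ds'.length + m, ?_, ?_, ?_⟩
    · rw [hp, hmd, hm]
      have h5 : ((5:ℝ))⁻¹ ^ ds'.length * (5:ℝ) ^ ds'.length = 1 := by
        rw [← mul_pow]; norm_num
      push_cast
      rw [List.length_cons, pow_succ]
      linear_combination (-(5:ℝ)⁻¹ * md) * h5
    · rw [hp, hmd]
      positivity
    · rw [hp, hmd]
      have h4 : (md : ℝ) ≤ 4 := by exact_mod_cast hmd4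
      have hb : ((5:ℝ)⁻¹) ^ (d :: ds').length = ((5:ℝ)⁻¹) ^ ds'.length * 5⁻¹ := by
        rw [List.length_cons, pow_succ]
      rw [hb]
      nlinarith [hm1, h4]

lemma pos_apply (d : E 3) (ds : List (E 3)) (i : Fin 3) :
    pos (d :: ds) i = (5:ℝ)⁻¹ * (d i + pos ds i) := by
  simp [pos, PiLp.smul_apply, PiLp.add_apply, smul_eq_mul, mul_add]

lemma pos_inj {w : List Bool} : ∀ {ds es : List (E 3)}, ds ∈ wordFin w →
    es ∈ wordFin w → pos ds = pos es → ds = es := by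
  induction w with
  | nil =>
    intro ds es hds hes _
    simp only [wordFin, Finset.mem_singleton] at hds hes
    rw [hds, hes]
  | cons b w ih =>
    intro ds es hds hes h
    obtain ⟨d, hd, ds', hds', rfl⟩ := mem_wordFin_cons.1 hds
    obtain ⟨e, he, es', hes', rfl⟩ := mem_wordFin_cons.1 hes
    have key : ∀ i : Fin 3, d i = e i ∧ pos ds' i = pos es' i := by
      intro i
      have hi : (5:ℝ)⁻¹ * (d i + pos ds' i) = (5:ℝ)⁻¹ * (e i + pos es' i) := by
        rw [← pos_apply, ← pos_apply, h]
      have hi' : d i + pos ds' i = e i + pos es' i := by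
        have : (5:ℝ)⁻¹ ≠ 0 := by norm_num
        exact mul_left_cancel₀ this hi
      obtain ⟨md, _, hmd⟩ := Dfin_digit hd i
      obtain ⟨me, _, hme⟩ := Dfin_digit he i
      obtain ⟨m1, _, hp0, hp1⟩ := pos_spec hds' i
      obtain ⟨m2, _, hq0, hq1⟩ := pos_spec hes' i
      have hlen : ds'.length = es'.length := by
        rw [wordFin_length hds', wordFin_length hes']
      rw [hlen] at hp1
      have hpow : (0:ℝ) < ((5:ℝ)⁻¹) ^ es'.length := by positivity
      have hmd_me : md = me := by
        rw [hmd, hme] at hi'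
        have h1 : (md:ℝ) < me + 1 := by linarith
        have h2 : (me:ℝ) < md + 1 := by linarith
        have h1' : md < me + 1 := by exact_mod_cast h1
        have h2' : me < md + 1 := by exact_mod_cast h2
        omega
      have hde : d i = e i := by rw [hmd, hme, hmd_me]
      exact ⟨hde, by rw [hde] at hi'; linarith⟩
    have hde : d = e := WithLp.ofLp_injective 2 (funext fun i => (key i).1)
    have hpos : pos ds' = pos es' := WithLp.ofLp_injective 2 (funext fun i => (key i).2)
    rw [hde, ih hds' hes' hpos]

lemma foldr_struct (w : List Bool) (S : Set (E 3)) :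
    w.foldr (fun b A => Ttil paperD b A) S =
      ⋃ ds ∈ wordFin w, (fun x => pos ds + ((5:ℝ)⁻¹) ^ w.length • x) '' S := by
  induction w with
  | nil =>
    simp [wordFin, pos, Set.image]
  | cons b w ih =>
    show Ttil paperD b (w.foldr (fun b A => Ttil paperD b A) S) = _
    rw [ih]
    unfold Ttil
    rw [← Dfin_coe]
    ext x
    constructor
    · rintro ⟨y, hy, rfl⟩
      rw [Set.mem_add] at hy
      obtain ⟨a, ha, d, hd, rfl⟩ := hy
      simp only [Set.mem_iUnion, Set.mem_image, Finset.mem_coe] at ha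
      obtain ⟨ds, hds, u, hu, rfl⟩ := ha
      simp only [Set.mem_iUnion, Set.mem_image]
      refine ⟨d :: ds, mem_wordFin_cons.2 ⟨d, hd, ds, hds, rfl⟩, u, hu, ?_⟩
      have hpos : pos (d :: ds) = (5:ℝ)⁻¹ • (d + pos ds) := rfl
      rw [hpos, List.length_cons, pow_succ]
      module
    · rintro hx
      simp only [Set.mem_iUnion, Set.mem_image] at hx
      obtain ⟨l, hl, u, hu, rfl⟩ := hx
      obtain ⟨d, hd, ds, hds, rfl⟩ := mem_wordFin_cons.1 hl
      refine ⟨(pos ds + ((5:ℝ)⁻¹) ^ w.length • u) + d, ?_, ?_⟩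
      · rw [Set.mem_add]
        refine ⟨_, ?_, d, hd, rfl⟩
        simp only [Set.mem_iUnion, Set.mem_image, Finset.mem_coe]
        exact ⟨ds, hds, u, hu, rfl⟩
      · have hpos : pos (d :: ds) = (5:ℝ)⁻¹ • (d + pos ds) := rfl
        rw [hpos, List.length_cons, pow_succ]
        module

lemma Fword_struct (w : List Bool) :
    Fword paperD w = ⋃ ds ∈ wordFin w,
      (fun x => pos ds + ((5:ℝ)⁻¹) ^ w.length • x) '' unitCube 3 :=
  foldr_struct w _

lemma Fword_append (w v : List Bool) :
    Fword paperD (w ++ v) = ⋃ ds ∈ wordFin w,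
      (fun x => pos ds + ((5:ℝ)⁻¹) ^ w.length • x) '' Fword paperD v := by
  unfold Fword
  rw [List.foldr_append]
  exact foldr_struct w _

lemma cube_mem {w : List Bool} {ds : List (E 3)} (hds : ds ∈ wordFin w) {u : E 3}
    (hu : u ∈ unitCube 3) :
    pos ds + ((5:ℝ)⁻¹) ^ w.length • u ∈ unitCube 3 := by
  intro i
  obtain ⟨m, _, hp0, hp1⟩ := pos_spec hds i
  rw [wordFin_length hds] at hp1
  have hui := hu i
  have hq : (0:ℝ) < ((5:ℝ)⁻¹) ^ w.length := by positivity
  have hxi : (pos ds + ((5:ℝ)⁻¹) ^ w.length • u) i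
      = pos ds i + ((5:ℝ)⁻¹) ^ w.length * u i := by
    simp [PiLp.add_apply, PiLp.smul_apply, smul_eq_mul]
  rw [hxi]
  constructor
  · nlinarith [hui.1, hui.2]
  · nlinarith [hui.1, hui.2]

lemma Fword_subset_unitCube (w : List Bool) : Fword paperD w ⊆ unitCube 3 := by
  rw [Fword_struct]
  intro x hx
  simp only [Set.mem_iUnion, Set.mem_image] at hx
  obtain ⟨ds, hds, u, hu, rfl⟩ := hx
  exact cube_mem hds hu

lemma Fword_append_subset (w v : List Bool) :
    Fword paperD (w ++ v) ⊆ Fword paperD w := by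
  rw [Fword_append]
  conv_rhs => rw [Fword_struct]
  apply Set.iUnion₂_mono
  intro ds hds
  exact Set.image_mono (Fword_subset_unitCube v)

lemma Dfin_nonempty (b : Bool) : (Dfin b).Nonempty :=
  Finset.card_pos.1 (by rw [Dfin_card]; cases b <;> norm_num)

lemma prefixList_length (α : ℕ → Bool) (k : ℕ) : (prefixList α k).length = k := by
  simp [prefixList]

lemma prefixList_append (α : ℕ → Bool) (k j : ℕ) :
    prefixList α (k + j) = prefixList α k ++ prefixList (fun n => α (k + n)) j := by
  unfold prefixList
  rw [List.ofFn_add]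
  congr 1

lemma isClosed_unitCube : IsClosed (unitCube 3) := by
  have h : unitCube 3 = ⋂ i : Fin 3, (fun x : E 3 => x i) ⁻¹' Set.Icc (0:ℝ) 1 := by
    ext x; simp [unitCube]
  rw [h]
  exact isClosed_iInter fun i =>
    isClosed_Icc.preimage (EuclideanSpace.proj (𝕜 := ℝ) i).continuous

lemma unitCube_norm_le {u : E 3} (hu : u ∈ unitCube 3) : ‖u‖ ≤ 2 := by
  rw [EuclideanSpace.norm_eq]
  have h : ∑ i : Fin 3, ‖u i‖ ^ 2 ≤ 4 := by
    have : ∀ i : Fin 3, ‖u i‖ ^ 2 ≤ 1 + 1/3 := by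
      intro i
      have h := hu i
      rw [Real.norm_eq_abs, abs_of_nonneg h.1]
      nlinarith [h.1, h.2]
    calc ∑ i : Fin 3, ‖u i‖ ^ 2 ≤ ∑ _i : Fin 3, (1 + 1/3 : ℝ) :=
          Finset.sum_le_sum fun i _ => this i
      _ = 4 := by norm_num
  calc Real.sqrt (∑ i : Fin 3, ‖u i‖ ^ 2) ≤ Real.sqrt 4 := Real.sqrt_le_sqrt h
    _ = 2 := by
        rw [show (4:ℝ) = 2 ^ 2 by norm_num, Real.sqrt_sq (by norm_num)]

lemma isCompact_unitCube : IsCompact (unitCube 3) := by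
  rw [Metric.isCompact_iff_isClosed_bounded]
  refine ⟨isClosed_unitCube, ?_⟩
  apply Metric.isBounded_iff_subset_closedBall (0 : E 3) |>.2
  exact ⟨2, fun x hx => by simpa [mem_closedBall_zero_iff] using unitCube_norm_le hx⟩

lemma zero_mem_unitCube : (0 : E 3) ∈ unitCube 3 := by
  intro i
  simp [unitCube]

lemma Fword_nonempty (w : List Bool) : (Fword paperD w).Nonempty := by
  rw [Fword_struct]
  obtain ⟨ds, hds⟩ := wordFin_nonempty w Dfin_nonempty
  exact ⟨pos ds + ((5:ℝ)⁻¹) ^ w.length • 0,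
    Set.mem_biUnion hds ⟨0, zero_mem_unitCube, rfl⟩⟩

lemma Fword_isCompact (w : List Bool) : IsCompact (Fword paperD w) := by
  rw [Fword_struct]
  apply (wordFin w).isCompact_biUnion
  intro ds _
  exact isCompact_unitCube.image
    (continuous_const.add (continuous_const_smul _))

lemma Fword_prefix_succ_subset (α : ℕ → Bool) (k : ℕ) :
    Fword paperD (prefixList α (k + 1)) ⊆ Fword paperD (prefixList α k) := by
  rw [prefixList_append α k 1]
  exact Fword_append_subset _ _

lemma Fword_prefix_antitone (α : ℕ → Bool) :
    Antitone (fun k => Fword paperD (prefixList α k)) :=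
  antitone_nat_of_succ_le (Fword_prefix_succ_subset α)

lemma Kset_subset_Fword (α : ℕ → Bool) (m : ℕ) :
    Kset paperD α ⊆ Fword paperD (prefixList α m) := by
  cases m with
  | zero =>
    refine (Set.iInter_subset _ 0).trans ?_
    exact (Fword_prefix_antitone α (Nat.zero_le 1))
  | succ j => exact Set.iInter_subset _ j

lemma Kset_subset_unitCube (α : ℕ → Bool) : Kset paperD α ⊆ unitCube 3 := by
  refine (Kset_subset_Fword α 1).trans (Fword_subset_unitCube _)

lemma Kset_nonempty (α : ℕ → Bool) : (Kset paperD α).Nonempty := by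
  apply IsCompact.nonempty_iInter_of_sequence_nonempty_isCompact_isClosed
  · exact fun k => Fword_prefix_succ_subset α (k + 1)
  · exact fun k => Fword_nonempty _
  · exact Fword_isCompact _
  · exact fun k => (Fword_isCompact _).isClosed

/-- Every admissible level-`k` cube contains a point of `K`. -/
lemma exists_point_in_cube {α : ℕ → Bool} {k : ℕ} {ds : List (E 3)}
    (hds : ds ∈ wordFin (prefixList α k)) :
    ∃ x ∈ Kset paperD α, ∀ i, pos ds i ≤ x i ∧ x i ≤ pos ds i + ((5:ℝ)⁻¹) ^ k := by
  set β : ℕ → Bool := fun n => α (k + n) with hβ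
  obtain ⟨y, hy⟩ := Kset_nonempty β
  have hyc : y ∈ unitCube 3 := Kset_subset_unitCube β hy
  refine ⟨pos ds + ((5:ℝ)⁻¹) ^ k • y, ?_, ?_⟩
  · rw [Kset]
    refine Set.mem_iInter.2 fun j => ?_
    rcases le_or_gt (j + 1) k with hjk | hjk
    · apply Fword_prefix_antitone α hjk
      show pos ds + ((5:ℝ)⁻¹) ^ k • y ∈ Fword paperD (prefixList α k)
      have := Fword_struct (prefixList α k)
      rw [prefixList_length] at this
      rw [this]
      exact Set.mem_biUnion hds ⟨y, hyc, rfl⟩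
    · -- j + 1 = k + m with m ≥ 1
      obtain ⟨m, hm⟩ : ∃ m, j + 1 = k + (m + 1) := ⟨j - k, by omega⟩
      rw [hm, prefixList_append α k (m + 1)]
      have := Fword_append (prefixList α k) (prefixList β (m + 1))
      rw [prefixList_length] at this
      rw [this]
      refine Set.mem_biUnion hds ⟨y, ?_, rfl⟩
      exact Kset_subset_Fword β (m + 1) hy
  · intro i
    have hx : (pos ds + ((5:ℝ)⁻¹) ^ k • y) i = pos ds i + ((5:ℝ)⁻¹) ^ k * y i := by
      simp [PiLp.add_apply, PiLp.smul_apply, smul_eq_mul]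
    have hyi := hyc i
    have hq : (0:ℝ) < ((5:ℝ)⁻¹) ^ k := by positivity
    rw [hx]
    constructor
    · nlinarith [hyi.1]
    · nlinarith [hyi.2]

/-- Number of zeros among the first `k` letters. -/
def Z (α : ℕ → Bool) (k : ℕ) : ℕ := ((Finset.range k).filter fun i => α i = false).card

def Nval (α : ℕ → Bool) (k : ℕ) : ℕ := 13 ^ (Z α k) * 44 ^ (k - Z α k)

lemma Z_le (α : ℕ → Bool) (k : ℕ) : Z α k ≤ k :=
  (Finset.card_filter_le _ _).trans (by rw [Finset.card_range])

lemma Z_mono (α : ℕ → Bool) : Monotone (Z α) := fun a b h =>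
  Finset.card_le_card (Finset.filter_subset_filter _ (Finset.range_subset_range.2 h))

lemma count_prefixList_false (α : ℕ → Bool) (k : ℕ) :
    (prefixList α k).count false = Z α k := by
  induction k with
  | zero => simp [prefixList, Z]
  | succ k ih =>
    have h1 : prefixList α (k + 1) = prefixList α k ++ [α k] := by
      rw [prefixList_append α k 1]
      congr 1
    rw [h1, List.count_append, ih]
    have hz : Z α (k+1) = Z α k + List.count false [α k] := by
      rw [Z, Z, Finset.range_add_one, Finset.filter_insert]
      by_cases h : α k = false
      · rw [if_pos h, Finset.card_insert_of_notMem (by simp), h]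
        simp
      · rw [if_neg h]
        have hb : α k = true := by revert h; cases α k <;> simp
        rw [hb]
        simp
    omega

lemma count_true_add_count_false (l : List Bool) :
    l.count true + l.count false = l.length := by
  induction l with
  | nil => simp
  | cons b l ih =>
    cases b <;> simp [List.count_cons] <;> omega

lemma count_prefixList_true (α : ℕ → Bool) (k : ℕ) :
    (prefixList α k).count true = k - Z α k := by
  have h := count_true_add_count_false (prefixList α k)
  rw [count_prefixList_false, prefixList_length] at h
  omega

lemma wordFin_card (w : List Bool) :
    (wordFin w).card = 13 ^ (w.count false) * 44 ^ (w.count true) := by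
  induction w with
  | nil => simp [wordFin]
  | cons b w ih =>
    have hinj : Function.Injective (fun p : E 3 × List (E 3) => p.1 :: p.2) := by
      rintro ⟨a, l⟩ ⟨a', l'⟩ h
      simp only [List.cons.injEq] at h
      exact Prod.ext h.1 h.2
    rw [wordFin, Finset.card_image_of_injective _ hinj, Finset.card_product, Dfin_card, ih]
    cases b <;> simp [List.count_cons, pow_succ] <;> ring

lemma wordFin_prefix_card (α : ℕ → Bool) (k : ℕ) :
    (wordFin (prefixList α k)).card = Nval α k := by
  rw [wordFin_card, count_prefixList_false, count_prefixList_true, Nval]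

lemma pow5_pos (k : ℕ) : (0:ℝ) < ((5:ℝ)⁻¹) ^ k := by positivity

lemma inv_pow_eq (k : ℕ) : ((5:ℝ)⁻¹) ^ k = 1 / 5 ^ k := by
  rw [inv_pow]; exact inv_eq_one_div _

/-- The explicit cover of `K` by balls of radius `1/5^k` centered at the level-`k+1`
cube positions. -/
lemma cover_exists (α : ℕ → Bool) (k : ℕ) :
    Kset paperD α ⊆ ⋃ x ∈ (wordFin (prefixList α (k+1))).image pos,
      Metric.ball x (1 / 5 ^ k) := by
  intro x hx
  have hx' : x ∈ Fword paperD (prefixList α (k+1)) := Kset_subset_Fword α (k+1) hx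
  rw [Fword_struct, prefixList_length] at hx'
  simp only [Set.mem_iUnion, Set.mem_image] at hx'
  obtain ⟨ds, hds, u, hu, rfl⟩ := hx'
  apply Set.mem_iUnion₂.2
  refine ⟨pos ds, Finset.mem_image_of_mem pos hds, ?_⟩
  rw [Metric.mem_ball, dist_eq_norm]
  have : pos ds + ((5:ℝ)⁻¹) ^ (k+1) • u - pos ds = ((5:ℝ)⁻¹) ^ (k+1) • u := by module
  rw [this, norm_smul, Real.norm_eq_abs, abs_of_pos (pow5_pos (k+1))]
  have h2 : ‖u‖ ≤ 2 := unitCube_norm_le hu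
  have h5 : ((5:ℝ)⁻¹) ^ (k+1) = ((5:ℝ)⁻¹) ^ k * 5⁻¹ := pow_succ _ _
  rw [← inv_pow_eq]
  nlinarith [pow5_pos k, pow5_pos (k+1), norm_nonneg u]

lemma coverNumber_le (α : ℕ → Bool) (k : ℕ) :
    coverNumber (Kset paperD α) (1 / 5 ^ k) ≤ Nval α (k + 1) := by
  have hmem : ((wordFin (prefixList α (k+1))).image pos).card ∈
      {m | ∃ t : Finset (E 3), t.card = m ∧
        Kset paperD α ⊆ ⋃ x ∈ t, Metric.ball x (1 / 5 ^ k)} :=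
    ⟨_, rfl, cover_exists α k⟩
  apply le_trans (Nat.sInf_le hmem)
  rw [← wordFin_prefix_card α (k+1)]
  exact Finset.card_image_le

lemma coord_abs_le_dist (x y : E 3) (i : Fin 3) : |x i - y i| ≤ dist x y := by
  rw [EuclideanSpace.dist_eq]
  rw [show |x i - y i| = Real.sqrt (dist (x i) (y i) ^ 2) by
    rw [Real.sqrt_sq_eq_abs, Real.dist_eq, abs_abs]]
  apply Real.sqrt_le_sqrt
  exact Finset.single_le_sum (f := fun j => dist (x j) (y j) ^ 2)
    (fun j _ => sq_nonneg _) (Finset.mem_univ i)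

lemma pos_floor {α : ℕ → Bool} {k : ℕ} {ds : List (E 3)}
    (hds : ds ∈ wordFin (prefixList α k)) (i : Fin 3) :
    ((⌊pos ds i * 5 ^ k⌋ : ℤ) : ℝ) * ((5:ℝ)⁻¹) ^ k = pos ds i := by
  obtain ⟨m, hm, _, _⟩ := pos_spec hds i
  rw [wordFin_length hds, prefixList_length] at hm
  have h1 : ((5:ℝ)⁻¹) ^ k * (5:ℝ) ^ k = 1 := by rw [← mul_pow]; norm_num
  have h2 : pos ds i * 5 ^ k = (m : ℝ) := by
    rw [hm]; rw [mul_assoc, h1, mul_one]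
  rw [h2, Int.floor_natCast, hm]
  norm_num

lemma le_coverNumber (α : ℕ → Bool) (k : ℕ) :
    Nval α k ≤ 27 * coverNumber (Kset paperD α) (1 / 5 ^ k) := by
  have hδpos : (0:ℝ) < 1 / 5 ^ k := by positivity
  have hne : Set.Nonempty {m | ∃ t : Finset (E 3), t.card = m ∧
      Kset paperD α ⊆ ⋃ x ∈ t, Metric.ball x (1 / 5 ^ k)} :=
    ⟨_, _, rfl, cover_exists α k⟩
  obtain ⟨t, htc, htcov⟩ := Nat.sInf_mem hne
  rw [← wordFin_prefix_card α k]
  have hcn : coverNumber (Kset paperD α) (1 / 5 ^ k) = t.card := htc.symm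
  rw [hcn]
  -- choose, for each admissible digit string, a ball of the cover meeting its cube
  have key : ∀ ds : List (E 3), ∃ c : E 3, ds ∈ wordFin (prefixList α k) →
      c ∈ t ∧ ∃ x : E 3,
        (∀ i, pos ds i ≤ x i ∧ x i ≤ pos ds i + ((5:ℝ)⁻¹) ^ k) ∧ dist x c < 1 / 5 ^ k := by
    intro ds
    by_cases hds : ds ∈ wordFin (prefixList α k)
    · obtain ⟨x, hxK, hxcube⟩ := exists_point_in_cube hds
      obtain ⟨c, hc, hball⟩ := Set.mem_iUnion₂.1 (htcov hxK)
      exact ⟨c, fun _ => ⟨hc, x, hxcube, Metric.mem_ball.1 hball⟩⟩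
    · exact ⟨0, fun h => (hds h).elim⟩
  choose f hf using key
  apply Finset.card_le_mul_card_image_of_maps_to (f := f) (fun ds hds => (hf ds hds).1)
  intro c _
  -- each fiber has at most 27 elements
  classical
  set q : Fin 3 → ℤ := fun i => ⌊c i * 5 ^ k⌋ with hq
  apply le_trans (Finset.card_le_card_of_injOn
    (f := fun ds => fun i => (⌊pos ds i * 5 ^ k⌋ : ℤ))
    (t := Fintype.piFinset fun i => Finset.Icc (q i - 1) (q i + 1)) ?_ ?_)
  · -- cardinality of the target is 27
    rw [Fintype.card_piFinset]
    apply le_of_eq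
    have : ∀ i : Fin 3, (Finset.Icc (q i - 1) (q i + 1)).card = 3 := by
      intro i; rw [Int.card_Icc]; omega
    simp [this]
  · -- membership
    intro ds hds
    rw [Finset.mem_coe, Finset.mem_filter] at hds
    obtain ⟨hdsw, hfd⟩ := hds
    obtain ⟨-, x, hxcube, hxdist⟩ := hf ds hdsw
    rw [hfd] at hxdist
    rw [Finset.mem_coe, Fintype.mem_piFinset]
    intro i
    rw [Finset.mem_Icc]
    have habs : |x i - c i| ≤ dist x c := coord_abs_le_dist x c i
    have hfl := pos_floor hdsw i
    set n : ℤ := ⌊pos ds i * 5 ^ k⌋ with hn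
    have hpow : (0:ℝ) < ((5:ℝ)⁻¹) ^ k := pow5_pos k
    have hip : ((5:ℝ)⁻¹) ^ k = 1 / 5 ^ k := inv_pow_eq k
    -- real inequalities
    have h1 : pos ds i ≤ x i := (hxcube i).1
    have h2 : x i ≤ pos ds i + 1 / 5 ^ k := by rw [← hip]; exact (hxcube i).2
    have h3 : |x i - c i| < 1 / 5 ^ k := lt_of_le_of_lt habs hxdist
    have h4 : (q i : ℝ) ≤ c i * 5 ^ k := Int.floor_le _
    have h5 : c i * 5 ^ k < q i + 1 := Int.lt_floor_add_one _
    have h6 : (n : ℝ) = pos ds i * 5 ^ k := by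
      rw [← hfl]; field_simp
      rw [mul_assoc, ← mul_pow]; norm_num
    have hpk : (0:ℝ) < 5 ^ k := by positivity
    have habs' : x i - c i < 1 / 5 ^ k ∧ c i - x i < 1 / 5 ^ k := by
      constructor <;> [linarith [le_abs_self (x i - c i), h3];
        linarith [neg_abs_le (x i - c i), h3]]
    -- n > c i * 5^k - 2  and n < c i * 5^k + 1
    have h8 : (1 / 5 ^ k : ℝ) * 5 ^ k = 1 := by field_simp
    have hl : c i * 5 ^ k - 2 < (n : ℝ) := by
      rw [h6]
      have hstep : c i < pos ds i + 1 / 5 ^ k + 1 / 5 ^ k := by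
        linarith [habs'.2]
      nlinarith [mul_lt_mul_of_pos_right hstep hpk]
    have hr : (n : ℝ) < c i * 5 ^ k + 1 := by
      rw [h6]
      have hstep : pos ds i < c i + 1 / 5 ^ k := by
        linarith [habs'.1]
      nlinarith [mul_lt_mul_of_pos_right hstep hpk]
    have hl' : q i - 2 < n := by
      have : ((q i : ℤ) : ℝ) - 2 < (n : ℝ) := by linarith
      exact_mod_cast this
    have hr' : n < q i + 2 := by
      have : (n : ℝ) < ((q i : ℤ) : ℝ) + 2 := by linarith
      exact_mod_cast this
    show q i - 1 ≤ n ∧ n ≤ q i + 1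
    omega
  · -- injectivity on the fiber
    intro ds hds es hes hfe
    rw [Finset.coe_filter, Set.mem_setOf_eq] at hds hes
    apply pos_inj hds.1 hes.1
    ext i
    have h1 := pos_floor hds.1 i
    have h2 := pos_floor hes.1 i
    have h3 : (⌊pos ds i * 5 ^ k⌋ : ℤ) = ⌊pos es i * 5 ^ k⌋ := congrFun hfe i
    rw [← h1, ← h2, h3]

open Filter in
lemma le_of_pos_add (A B : ℝ) (h : ∀ ε : ℝ, 0 < ε → A ≤ B + ε) : A ≤ B := by
  by_contra hc
  push_neg at hc
  have := h ((A - B)/2) (by linarith)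
  linarith

open Filter in
/-- Main asymptotic transfer lemma. -/
lemma liminf_limsup_transfer (lam g : ℕ → ℝ) (a b C : ℝ)
    (hab : a ≤ b) (hC : 0 ≤ C)
    (hlam : ∀ k, lam k ∈ Set.Icc (0:ℝ) 1)
    (hbound : ∀ k : ℕ, 1 ≤ k → |g k - (lam k * a + (1 - lam k) * b)| ≤ C / k) :
    liminf g atTop = limsup lam atTop * a + (1 - limsup lam atTop) * b ∧
    limsup g atTop = liminf lam atTop * a + (1 - liminf lam atTop) * b := by
  set h : ℕ → ℝ := fun k => lam k * a + (1 - lam k) * b with hh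
  -- boundedness facts
  have hlam_bdd_above : IsBoundedUnder (· ≤ ·) atTop lam :=
    isBoundedUnder_of ⟨1, fun k => (hlam k).2⟩
  have hlam_bdd_below : IsBoundedUnder (· ≥ ·) atTop lam :=
    isBoundedUnder_of ⟨0, fun k => (hlam k).1⟩
  have hlam_cobdd_above : IsCoboundedUnder (· ≤ ·) atTop lam :=
    hlam_bdd_below.isCoboundedUnder_le
  have hlam_cobdd_below : IsCoboundedUnder (· ≥ ·) atTop lam :=
    hlam_bdd_above.isCoboundedUnder_ge
  have hh_lb : ∀ k, a ≤ h k := by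
    intro k
    have h0 := (hlam k).1
    have h1 := (hlam k).2
    simp only [hh]
    nlinarith
  have hh_ub : ∀ k, h k ≤ b := by
    intro k
    have h0 := (hlam k).1
    have h1 := (hlam k).2
    simp only [hh]
    nlinarith
  have hh_bdd_above : IsBoundedUnder (· ≤ ·) atTop h := isBoundedUnder_of ⟨b, hh_ub⟩
  have hh_bdd_below : IsBoundedUnder (· ≥ ·) atTop h := isBoundedUnder_of ⟨a, hh_lb⟩
  have hg_ev_ub : ∀ᶠ k in atTop, g k ≤ b + C := by
    filter_upwards [eventually_ge_atTop 1] with k hk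
    have hb := hbound k hk
    have h2 : C / k ≤ C := by
      rcases Nat.exists_eq_add_of_le hk with ⟨m, rfl⟩
      have : (1:ℝ) ≤ (1 + m : ℕ) := by exact_mod_cast hk
      calc C / ((1 + m : ℕ):ℝ) ≤ C / 1 := by
            apply div_le_div_of_nonneg_left hC ?_ this <;> norm_num
        _ = C := by norm_num
    have := abs_le.1 hb
    have := hh_ub k
    simp only [hh] at *
    linarith [this]
  have hg_ev_lb : ∀ᶠ k in atTop, a - C ≤ g k := by
    filter_upwards [eventually_ge_atTop 1] with k hk
    have hb := hbound k hk
    have h2 : C / k ≤ C := by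
      have h1 : (1:ℝ) ≤ (k:ℝ) := by exact_mod_cast hk
      calc C / (k:ℝ) ≤ C / 1 := by
            apply div_le_div_of_nonneg_left hC ?_ h1 <;> norm_num
        _ = C := by norm_num
    have h3 := abs_le.1 hb
    have h4 := hh_lb k
    simp only [hh] at *
    linarith [h3.2]
  have hg_bdd_above : IsBoundedUnder (· ≤ ·) atTop g :=
    isBoundedUnder_of_eventually_le hg_ev_ub
  have hg_bdd_below : IsBoundedUnder (· ≥ ·) atTop g :=
    isBoundedUnder_of_eventually_ge hg_ev_lb
  have hg_cobdd_above : IsCoboundedUnder (· ≤ ·) atTop g := hg_bdd_below.isCoboundedUnder_le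
  have hg_cobdd_below : IsCoboundedUnder (· ≥ ·) atTop g := hg_bdd_above.isCoboundedUnder_ge
  -- eventual closeness
  have hclose : ∀ ε : ℝ, 0 < ε → ∀ᶠ k in atTop, |g k - h k| ≤ ε := by
    intro ε hε
    have := tendsto_const_div_atTop_nhds_zero_nat C
    have hev := (this.eventually (eventually_le_nhds hε)).and (eventually_ge_atTop 1)
    filter_upwards [hev] with k hk
    exact le_trans (hbound k hk.2) (le_trans hk.1 le_rfl)
  -- liminf g = liminf h
  have liminf_eq : liminf g atTop = liminf h atTop := by
    apply le_antisymm
    · apply le_of_pos_add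
      intro ε hε
      have h1 : liminf g atTop ≤ liminf (fun k => h k + ε) atTop := by
        apply liminf_le_liminf
        · filter_upwards [hclose ε hε] with k hk
          have := (abs_le.1 hk).2
          linarith
        · exact hg_bdd_below
        · apply IsBoundedUnder.isCoboundedUnder_ge
          exact isBoundedUnder_of ⟨b + ε, fun k => by linarith [hh_ub k]⟩
      rwa [liminf_add_const atTop h ε hh_bdd_above.isCoboundedUnder_ge hh_bdd_below] at h1
    · apply le_of_pos_add
      intro ε hε
      have h1 : liminf h atTop ≤ liminf (fun k => g k + ε) atTop := by
        apply liminf_le_liminf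
        · filter_upwards [hclose ε hε] with k hk
          have := (abs_le.1 hk).1
          linarith
        · exact hh_bdd_below
        · apply IsBoundedUnder.isCoboundedUnder_ge
          exact isBoundedUnder_of_eventually_le (a := b + C + ε)
            (by filter_upwards [hg_ev_ub] with k hk; linarith)
      rwa [liminf_add_const atTop g ε hg_cobdd_below hg_bdd_below] at h1
  -- limsup g = limsup h
  have limsup_eq : limsup g atTop = limsup h atTop := by
    apply le_antisymm
    · apply le_of_pos_add
      intro ε hε
      have h1 : limsup g atTop ≤ limsup (fun k => h k + ε) atTop := by
        apply limsup_le_limsup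
        · filter_upwards [hclose ε hε] with k hk
          have := (abs_le.1 hk).2
          linarith
        · exact hg_cobdd_above
        · exact isBoundedUnder_of ⟨b + ε, fun k => by linarith [hh_ub k]⟩
      rwa [limsup_add_const atTop h ε hh_bdd_above hh_bdd_below.isCoboundedUnder_le] at h1
    · apply le_of_pos_add
      intro ε hε
      have h1 : limsup h atTop ≤ limsup (fun k => g k + ε) atTop := by
        apply limsup_le_limsup
        · filter_upwards [hclose ε hε] with k hk
          have := (abs_le.1 hk).1
          linarith
        · exact hh_bdd_below.isCoboundedUnder_le
        · exact isBoundedUnder_of_eventually_le (a := b + C + ε)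
            (by filter_upwards [hg_ev_ub] with k hk; linarith)
      rwa [limsup_add_const atTop g ε hg_bdd_above hg_cobdd_above] at h1
  -- compute liminf h and limsup h
  have hfun : h = fun k => b - (b - a) * lam k := by
    funext k; simp only [hh]; ring
  have hmul_limsup : limsup (fun k => (b - a) * lam k) atTop = (b - a) * limsup lam atTop := by
    have := Monotone.map_limsup_of_continuousAt (F := atTop)
      (f := fun x : ℝ => (b - a) * x)
      (fun x y hxy => mul_le_mul_of_nonneg_left hxy (by linarith)) lam
      ((continuous_mul_left _).continuousAt) hlam_bdd_above hlam_cobdd_above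
    exact this.symm
  have hmul_liminf : liminf (fun k => (b - a) * lam k) atTop = (b - a) * liminf lam atTop := by
    have := Monotone.map_liminf_of_continuousAt (F := atTop)
      (f := fun x : ℝ => (b - a) * x)
      (fun x y hxy => mul_le_mul_of_nonneg_left hxy (by linarith)) lam
      ((continuous_mul_left _).continuousAt) hlam_cobdd_below hlam_bdd_below
    exact this.symm
  have hmul_bdd_above : IsBoundedUnder (· ≤ ·) atTop (fun k => (b - a) * lam k) :=
    isBoundedUnder_of ⟨b - a, fun k => by nlinarith [(hlam k).1, (hlam k).2]⟩
  have hmul_bdd_below : IsBoundedUnder (· ≥ ·) atTop (fun k => (b - a) * lam k) :=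
    isBoundedUnder_of ⟨0, fun k => by nlinarith [(hlam k).1, (hlam k).2]⟩
  have hliminf_h : liminf h atTop = b - (b - a) * limsup lam atTop := by
    rw [hfun, liminf_const_sub atTop _ b hmul_bdd_above hmul_bdd_below.isCoboundedUnder_le,
      hmul_limsup]
  have hlimsup_h : limsup h atTop = b - (b - a) * liminf lam atTop := by
    rw [hfun, limsup_const_sub atTop _ b hmul_bdd_above.isCoboundedUnder_ge hmul_bdd_below,
      hmul_liminf]
  constructor
  · rw [liminf_eq, hliminf_h]; ring
  · rw [limsup_eq, hlimsup_h]; ring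

lemma Z_succ (α : ℕ → Bool) (k : ℕ) :
    Z α (k + 1) = Z α k + (if α k = false then 1 else 0) := by
  rw [Z, Z, Finset.range_add_one, Finset.filter_insert]
  by_cases h : α k = false
  · rw [if_pos h, if_pos h, Finset.card_insert_of_notMem (by simp)]
  · rw [if_neg h, if_neg h, add_zero]

lemma Nval_pos (α : ℕ → Bool) (k : ℕ) : 0 < Nval α k := by
  exact Nat.mul_pos (Nat.pow_pos (by norm_num)) (Nat.pow_pos (by norm_num))

lemma Nval_succ_le (α : ℕ → Bool) (k : ℕ) : Nval α (k + 1) ≤ 44 * Nval α k := by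
  have hz := Z_succ α k
  have hzk := Z_le α k
  by_cases h : α k = false
  · rw [if_pos h] at hz
    rw [Nval, Nval, hz]
    have h1 : k + 1 - (Z α k + 1) = k - Z α k := by omega
    rw [h1, pow_succ]
    calc 13 ^ Z α k * 13 * 44 ^ (k - Z α k) ≤ 13 ^ Z α k * 44 * 44 ^ (k - Z α k) := by
          apply Nat.mul_le_mul_right
          apply Nat.mul_le_mul_left
          norm_num
      _ = 44 * (13 ^ Z α k * 44 ^ (k - Z α k)) := by ring
  · rw [if_neg h] at hz
    rw [Nval, Nval, hz, add_zero]
    have h1 : k + 1 - Z α k = (k - Z α k) + 1 := by omega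
    rw [h1, pow_succ]
    calc 13 ^ Z α k * (44 ^ (k - Z α k) * 44) = 44 * (13 ^ Z α k * 44 ^ (k - Z α k)) := by ring
      _ ≤ _ := le_refl _

lemma cover_pos (α : ℕ → Bool) (k : ℕ) :
    0 < coverNumber (Kset paperD α) (1 / 5 ^ k) := by
  have h := le_coverNumber α k
  have h2 := Nval_pos α k
  omega


/-- With `λ̄ = limsup λ_m` and `λ̲ = liminf λ_m`, the lower box dimension
of `K_α` is `λ̄·log₅13 + (1-λ̄)·log₅44` and the upper box dimension is
`λ̲·log₅13 + (1-λ̲)·log₅44`. -/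
theorem Kset_box_dimensions (α : ℕ → Bool) :
    lowerBoxDim (Kset paperD α) =
        Filter.limsup (zeroDensity α) Filter.atTop * Real.logb 5 13 +
          (1 - Filter.limsup (zeroDensity α) Filter.atTop) * Real.logb 5 44 ∧
      upperBoxDim (Kset paperD α) =
        Filter.liminf (zeroDensity α) Filter.atTop * Real.logb 5 13 +
          (1 - Filter.liminf (zeroDensity α) Filter.atTop) * Real.logb 5 44 := by
  have hlog5 : (0:ℝ) < Real.log 5 := Real.log_pos (by norm_num)
  have hab : Real.logb 5 13 ≤ Real.logb 5 44 :=
    Real.logb_le_logb_of_le (b := 5) (by norm_num) (by norm_num) (by norm_num)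
  have hC : (0:ℝ) ≤ Real.log 44 / Real.log 5 := by
    apply div_nonneg (Real.log_nonneg (by norm_num)) hlog5.le
  have hlam : ∀ k, zeroDensity α k ∈ Set.Icc (0:ℝ) 1 := by
    intro k
    constructor
    · apply div_nonneg <;> positivity
    · rcases Nat.eq_zero_or_pos k with rfl | hk
      · simp [zeroDensity]
      · rw [zeroDensity, div_le_one (by exact_mod_cast hk)]
        exact_mod_cast Z_le α k
  have hbound : ∀ k : ℕ, 1 ≤ k →
      |Real.log (coverNumber (Kset paperD α) (1 / 5 ^ k)) / ((k : ℝ) * Real.log 5) -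
        (zeroDensity α k * Real.logb 5 13 + (1 - zeroDensity α k) * Real.logb 5 44)| ≤
      (Real.log 44 / Real.log 5) / k := by
    intro k hk
    have hk0 : (0:ℝ) < k := by exact_mod_cast hk
    set Ck := coverNumber (Kset paperD α) (1 / 5 ^ k) with hCk
    have h27 : Nval α k ≤ 27 * Ck := le_coverNumber α k
    have h44 : Ck ≤ 44 * Nval α k := (coverNumber_le α k).trans (Nval_succ_le α k)
    have hNpos : 0 < Nval α k := Nval_pos α k
    have hCpos : 0 < Ck := cover_pos α k
    have hNR : (0:ℝ) < (Nval α k : ℝ) := by exact_mod_cast hNpos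
    have hCR : (0:ℝ) < (Ck : ℝ) := by exact_mod_cast hCpos
    have hzk : (Z α k : ℝ) ≤ (k : ℝ) := by exact_mod_cast Z_le α k
    have hlogN : Real.log (Nval α k) =
        (Z α k : ℝ) * Real.log 13 + ((k : ℝ) - Z α k) * Real.log 44 := by
      rw [Nval, Nat.cast_mul, Real.log_mul (by positivity) (by positivity)]
      rw [Nat.cast_pow, Nat.cast_pow, Real.log_pow, Real.log_pow]
      rw [Nat.cast_sub (Z_le α k)]
      push_cast
      ring
    have hup : Real.log Ck ≤ Real.log (Nval α k) + Real.log 44 := by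
      have h1 : (Ck:ℝ) ≤ 44 * (Nval α k : ℝ) := by exact_mod_cast h44
      calc Real.log Ck ≤ Real.log (44 * Nval α k) := Real.log_le_log hCR h1
        _ = Real.log 44 + Real.log (Nval α k) := Real.log_mul (by norm_num) (ne_of_gt hNR)
        _ = _ := by ring
    have hlo : Real.log (Nval α k) - Real.log 27 ≤ Real.log Ck := by
      have h1 : (Nval α k : ℝ) ≤ 27 * (Ck : ℝ) := by exact_mod_cast h27
      have h2 : Real.log (Nval α k) ≤ Real.log (27 * Ck) := Real.log_le_log hNR h1
      rw [Real.log_mul (by norm_num) (ne_of_gt hCR)] at h2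
      linarith
    have hh' : zeroDensity α k * Real.logb 5 13 + (1 - zeroDensity α k) * Real.logb 5 44 =
        Real.log (Nval α k) / ((k : ℝ) * Real.log 5) := by
      have hzd : zeroDensity α k = (Z α k : ℝ) / k := rfl
      rw [hlogN, hzd, Real.logb, Real.logb]
      field_simp
    rw [hh']
    have h2744 : Real.log 27 ≤ Real.log 44 := Real.log_le_log (by norm_num) (by norm_num)
    have habs : |Real.log Ck - Real.log (Nval α k)| ≤ Real.log 44 := by
      rw [abs_le]
      constructor <;> linarith
    have heq : |Real.log Ck / ((k:ℝ) * Real.log 5) - Real.log (Nval α k) / ((k:ℝ) * Real.log 5)|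
        = |Real.log Ck - Real.log (Nval α k)| / ((k:ℝ) * Real.log 5) := by
      rw [div_sub_div_same, abs_div, abs_of_pos (mul_pos hk0 hlog5)]
    rw [heq]
    have hrhs : (Real.log 44 / Real.log 5) / (k:ℝ) = Real.log 44 / ((k:ℝ) * Real.log 5) := by
      rw [div_div]
      ring_nf
    rw [hrhs]
    exact div_le_div_of_nonneg_right habs (by positivity) |>.trans_eq rfl
  have := liminf_limsup_transfer (zeroDensity α)
    (fun k : ℕ => Real.log (coverNumber (Kset paperD α) (1 / 5 ^ k)) / ((k : ℝ) * Real.log 5))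
    (Real.logb 5 13) (Real.logb 5 44) (Real.log 44 / Real.log 5) hab hC hlam hbound
  exact this
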